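/- With f : I_n → I_{n-1} × {0,1} as above (f(w) = (π(w), [n occurs in w])), for every q in I_{n-1} × {0,1}, the preimage of the order ideal generated by q equals the order ideal generated by the finite set f⁻¹(q), i.e., f⁻¹(⟨q⟩) = ⟨f⁻¹(q)⟩. -/

import Mathlib

/-- Injective words over the alphabet `{1, …, n}`. -/
def NWord (n : ℕ) : Type := {l : List ℕ // l.Nodup ∧ ∀ x ∈ l, 1 ≤ x ∧ x ≤ n}

/-- Deletion of the letter `n` from an injective word over `{1, …, n}`. -/
def delTop (n : ℕ) (w : NWord n) : NWord (n - 1) :=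
  ⟨w.val.erase n, by
    obtain ⟨hnd, hmem⟩ := w.prop
    refine ⟨hnd.erase n, fun x hx => ?_⟩
    rw [hnd.mem_erase_iff] at hx
    have := hmem x hx.2
    omega⟩

/-- The map `f : I_n → I_{n-1} × {0,1}`. -/
def injMap (n : ℕ) (w : NWord n) : NWord (n - 1) × Bool :=
  (delTop n w, decide (n ∈ w.val))

/-- For every `q ∈ I_{n-1} × {0,1}`, the preimage under `f` of the order
ideal generated by `q` equals the order ideal generated by the fiber
`f⁻¹(q)`: `f⁻¹(⟨q⟩) = ⟨f⁻¹(q)⟩`. -/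
theorem stmt_14 {n : ℕ} (hn : 1 ≤ n) (q : NWord (n - 1) × Bool) :
    {w : NWord n |
        (injMap n w).1.val.Sublist q.1.val ∧ (injMap n w).2 ≤ q.2} =
      {w : NWord n | ∃ v : NWord n, injMap n v = q ∧ w.val.Sublist v.val} := by
  have hnq : n ∉ q.1.val := fun h => by
    have := q.1.prop.2 n h; omega
  ext w
  simp only [Set.mem_setOf_eq]
  constructor
  · rintro ⟨hsub, hle⟩
    simp only [injMap, delTop] at hsub hle
    by_cases hnw : n ∈ w.val
    · -- q.2 must be true
      have hq2 : q.2 = true := by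
        revert hle; simp [hnw]; cases q.2 <;> simp
      obtain ⟨a, b, hab⟩ := List.append_of_mem hnw
      have hnd := w.prop.1
      rw [hab] at hnd
      have hna : n ∉ a := fun h => (List.disjoint_of_nodup_append hnd) h List.mem_cons_self
      have herase : w.val.erase n = a ++ b := by
        rw [hab, List.erase_append_right _ hna, List.erase_cons_head]
      rw [herase] at hsub
      obtain ⟨r₁, r₂, hr, ha, hb⟩ := List.append_sublist_iff.mp hsub
      refine ⟨⟨r₁ ++ n :: r₂, ?_, ?_⟩, ?_, ?_⟩
      · have : (r₁ ++ n :: r₂).Nodup → True := fun _ => trivial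
        have hq := q.1.prop.1
        rw [hr] at hq hnq
        rw [List.nodup_append] at hq ⊢
        refine ⟨hq.1, List.nodup_cons.mpr ⟨fun h => hnq (List.mem_append_right _ h), hq.2.1⟩,
          fun x hx y hy' => ?_⟩
        rcases List.mem_cons.mp hy' with rfl | hx2
        · rintro rfl; exact hnq (List.mem_append_left _ hx)
        · exact hq.2.2 x hx y hx2
      · intro x hx
        rcases List.mem_append.mp hx with h | h
        · have := q.1.prop.2 x (by rw [hr]; exact List.mem_append_left _ h); omega
        · rcases List.mem_cons.mp h with rfl | h
          · omega
          · have := q.1.prop.2 x (by rw [hr]; exact List.mem_append_right _ h)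
            omega
      · have hmem : n ∈ r₁ ++ n :: r₂ := List.mem_append_right _ List.mem_cons_self
        simp only [injMap, delTop]
        refine Prod.ext ?_ (by rw [decide_eq_true hmem, hq2])
        apply Subtype.ext
        simp only
        rw [hr] at hnq
        rw [List.erase_append_right _ (fun h => hnq (List.mem_append_left _ h)),
          List.erase_cons_head, hr]
      · rw [hab]
        exact ha.append (hb.cons_cons n)
    · -- n not in w
      have herase : w.val.erase n = w.val := List.erase_of_not_mem hnw
      rw [herase] at hsub
      cases hq2 : q.2 with
      | false =>
        refine ⟨⟨q.1.val, q.1.prop.1, fun x hx => ?_⟩, ?_, hsub⟩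
        · have := q.1.prop.2 x hx; omega
        · simp only [injMap, delTop]
          exact Prod.ext (Subtype.ext (List.erase_of_not_mem hnq)) (by simp only []; rw [decide_eq_false hnq, hq2])
      | true =>
        refine ⟨⟨q.1.val ++ [n], ?_, fun x hx => ?_⟩, ?_, ?_⟩
        · simpa [List.nodup_append] using ⟨q.1.prop.1, fun a ha h => hnq (h ▸ ha)⟩
        · rcases List.mem_append.mp hx with h | h
          · have := q.1.prop.2 x h; omega
          · simp at h; omega
        · simp only [injMap, delTop]
          refine Prod.ext (Subtype.ext ?_) (by simp [hq2])
          simp only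
          rw [List.erase_append_right _ hnq]
          simp
        · exact hsub.trans (List.sublist_append_left _ _)
  · rintro ⟨v, rfl, hsub⟩
    simp only [injMap, delTop]
    exact ⟨List.Sublist.erase n hsub, by
      by_cases h : n ∈ w.val
      · simp [h, hsub.mem h]
      · simp [h]⟩
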